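/- Pairwise exchangeability for the features: for any subset S ⊆ {1,…,p}, the Gram matrix of the augmented design is invariant under swapping, i.e. ([X X̃]_swap(S))ᵀ [X X̃]_swap(S) = [X X̃]ᵀ [X X̃]. -/

import Mathlib

open Matrix

/-- The augmented design `[X X̃]`: the `n × 2p` columnwise concatenation of `X` and `X̃`. -/
def knockoffAug {n p : ℕ} (X Xt : Matrix (Fin n) (Fin p) ℝ) :
    Matrix (Fin n) (Fin p ⊕ Fin p) ℝ :=
  Matrix.fromCols X Xt

/-- `[X X̃]_swap(S)`: the augmented design with columns `X_j` and `X̃_j` exchanged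
for each `j ∈ S`. -/
def knockoffSwap {n p : ℕ} (X Xt : Matrix (Fin n) (Fin p) ℝ) (S : Finset (Fin p)) :
    Matrix (Fin n) (Fin p ⊕ Fin p) ℝ :=
  Matrix.fromCols
    (Matrix.of fun i j => if j ∈ S then Xt i j else X i j)
    (Matrix.of fun i j => if j ∈ S then X i j else Xt i j)

/-- **Pairwise exchangeability for the features** (Lemma 2): if `X̃` is a knockoff
matrix for `X`, i.e. `X̃ᵀX̃ = XᵀX = Σ` and `XᵀX̃ = Σ − diag{s}`, then for any subset
`S ⊆ {1,…,p}` the Gram matrix of the augmented design is invariant under swapping: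
`([X X̃]_swap(S))ᵀ [X X̃]_swap(S) = [X X̃]ᵀ [X X̃]`. -/
theorem knockoff_swap_gram_invariant {n p : ℕ}
    (X Xt : Matrix (Fin n) (Fin p) ℝ) (s : Fin p → ℝ)
    (h1 : Xtᵀ * Xt = Xᵀ * X)
    (h2 : Xᵀ * Xt = Xᵀ * X - Matrix.diagonal s)
    (S : Finset (Fin p)) :
    (knockoffSwap X Xt S)ᵀ * knockoffSwap X Xt S
      = (knockoffAug X Xt)ᵀ * knockoffAug X Xt := by
  -- XtᵀX = XᵀX - diag s, by transposing h2
  have h3 : Xtᵀ * X = Xᵀ * X - Matrix.diagonal s := by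
    have := congrArg Matrix.transpose h2
    simpa [Matrix.transpose_sub, Matrix.transpose_mul, Matrix.diagonal_transpose,
      Matrix.mul_assoc] using this
  -- entrywise versions
  have e1 : ∀ j k, ∑ i, Xt i j * Xt i k = ∑ i, X i j * X i k := fun j k => by
    simpa [Matrix.mul_apply, Matrix.transpose_apply] using congrFun (congrFun h1 j) k
  have e2 : ∀ j k, ∑ i, X i j * Xt i k
      = (∑ i, X i j * X i k) - Matrix.diagonal s j k := fun j k => by
    simpa [Matrix.mul_apply, Matrix.transpose_apply, Matrix.sub_apply]
      using congrFun (congrFun h2 j) k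
  have e3 : ∀ j k, ∑ i, Xt i j * X i k
      = (∑ i, X i j * X i k) - Matrix.diagonal s j k := fun j k => by
    simpa [Matrix.mul_apply, Matrix.transpose_apply, Matrix.sub_apply]
      using congrFun (congrFun h3 j) k
  ext a b
  cases a with
  | inl j =>
    cases b with
    | inl k =>
      simp only [knockoffSwap, knockoffAug, Matrix.mul_apply, Matrix.transpose_apply,
        Matrix.fromCols, Matrix.of_apply, Sum.elim_inl]
      by_cases hj : j ∈ S <;> by_cases hk : k ∈ S <;> simp [hj, hk, e1, e2, e3]
      · have hjk : j ≠ k := fun h => hk (h ▸ hj)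
        simp [e3, Matrix.diagonal_apply_ne _ hjk]
      · have hjk : j ≠ k := fun h => hj (h ▸ hk)
        simp [e2, Matrix.diagonal_apply_ne _ hjk]
    | inr k =>
      simp only [knockoffSwap, knockoffAug, Matrix.mul_apply, Matrix.transpose_apply,
        Matrix.fromCols, Matrix.of_apply, Sum.elim_inl, Sum.elim_inr]
      by_cases hj : j ∈ S <;> by_cases hk : k ∈ S <;> simp [hj, hk, e1, e2, e3]
      · have hjk : j ≠ k := fun h => hk (h ▸ hj)
        simp [e1, e2, Matrix.diagonal_apply_ne _ hjk]
      · have hjk : j ≠ k := fun h => hj (h ▸ hk)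
        simp [e2, Matrix.diagonal_apply_ne _ hjk]
  | inr j =>
    cases b with
    | inl k =>
      simp only [knockoffSwap, knockoffAug, Matrix.mul_apply, Matrix.transpose_apply,
        Matrix.fromCols, Matrix.of_apply, Sum.elim_inl, Sum.elim_inr]
      by_cases hj : j ∈ S <;> by_cases hk : k ∈ S <;> simp [hj, hk, e1, e2, e3]
      · have hjk : j ≠ k := fun h => hk (h ▸ hj)
        simp [e1, e3, Matrix.diagonal_apply_ne _ hjk]
      · have hjk : j ≠ k := fun h => hj (h ▸ hk)
        simp [e3, Matrix.diagonal_apply_ne _ hjk]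
    | inr k =>
      simp only [knockoffSwap, knockoffAug, Matrix.mul_apply, Matrix.transpose_apply,
        Matrix.fromCols, Matrix.of_apply, Sum.elim_inr]
      by_cases hj : j ∈ S <;> by_cases hk : k ∈ S <;> simp [hj, hk, e1, e2, e3]
      · have hjk : j ≠ k := fun h => hk (h ▸ hj)
        simp [e2, Matrix.diagonal_apply_ne _ hjk]
      · have hjk : j ≠ k := fun h => hj (h ▸ hk)
        simp [e3, Matrix.diagonal_apply_ne _ hjk]
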